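/- Fix E ∈ ℝ and ε > 0 with 144·d²·ε ≤ 1. Call a position x ∈ Λ ε-resonant if min(|√(u_x²+1) − E|, |√(u_x²+1) + E|) ≤ ε, and let R ⊆ Λ be the set of ε-resonant positions. Then for any two positions x, y ∈ Λ, the probability that x and y lie in the same connected component of R (where two positions of R are adjacent if their ℓ¹ distance equals 1) is at most (12d√ε)^{|x−y|+1}. -/

import Mathlib

open MeasureTheory

/-- The uniform probability measure on `[-1,1]`. -/
noncomputable def unif : Measure ℝ :=
  ((2 : NNReal))⁻¹ • (volume.restrict (Set.Icc (-1 : ℝ) 1))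

instance : IsProbabilityMeasure unif := by
  constructor
  rw [unif, Measure.smul_apply, Measure.restrict_apply_univ, Real.volume_Icc]
  norm_num
  rw [ENNReal.smul_def]
  simp [ENNReal.inv_mul_cancel]

/-- The product of uniform measures on `[-1,1]^ι` (i.i.d. uniform random variables). -/
noncomputable def unifPi (ι : Type*) [Fintype ι] : Measure (ι → ℝ) :=
  Measure.pi fun _ => unif

/-- The ℓ¹ distance `|x-y| = Σᵢ |xᵢ-yᵢ|` on `ℤ^d`, as a natural number. -/
def dist1 {d : ℕ} (x y : Fin d → ℤ) : ℕ := ∑ i, (x i - y i).natAbs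

lemma min_abs_eq (E s : ℝ) (hs : 0 ≤ s) : min |s - E| |s + E| = abs (s - |E|) := by
  rcases le_or_gt 0 E with h | h
  · rw [abs_of_nonneg h, min_eq_left]
    rw [abs_of_nonneg (by positivity : (0:ℝ) ≤ s + E)]
    cases abs_cases (s - E) with
    | inl hc => linarith [hc.1]
    | inr hc => linarith [hc.1]
  · rw [abs_of_neg h, min_eq_right]
    · ring_nf
    · rw [abs_of_nonneg (by linarith : (0:ℝ) ≤ s - E)]
      cases abs_cases (s + E) with
      | inl hc => linarith [hc.1]
      | inr hc => linarith [hc.1]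

lemma unif_le (A : Set ℝ) (c : ℝ) (hc : 0 ≤ c)
    (h : volume (A ∩ Set.Icc (-1:ℝ) 1) ≤ ENNReal.ofReal (2*c)) :
    unif A ≤ ENNReal.ofReal c := by
  rw [unif, Measure.smul_apply, Measure.restrict_apply' measurableSet_Icc]
  rw [ENNReal.smul_def, smul_eq_mul, ENNReal.coe_inv (two_ne_zero)]
  calc ((2:NNReal):ENNReal)⁻¹ * volume (A ∩ Set.Icc (-1:ℝ) 1)
      ≤ ((2:NNReal):ENNReal)⁻¹ * ENNReal.ofReal (2*c) := by
        exact mul_le_mul_right h _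
    _ = ENNReal.ofReal c := by
        rw [ENNReal.ofReal_mul (by norm_num : (0:ℝ) ≤ 2)]
        rw [ENNReal.ofReal_ofNat]
        norm_num
        rw [← mul_assoc, ENNReal.inv_mul_cancel (by norm_num) (by norm_num), one_mul]

lemma unif_resonant_le (E ε : ℝ) (hε0 : 0 < ε) (hε1 : ε ≤ 1/144) :
    unif {t : ℝ | min |Real.sqrt (t^2+1) - E| |Real.sqrt (t^2+1) + E| ≤ ε}
      ≤ ENNReal.ofReal (3 * Real.sqrt ε) := by
  set F := |E| with hF
  have hF0 : 0 ≤ F := abs_nonneg E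
  have hs0 : ∀ t : ℝ, 0 ≤ Real.sqrt (t^2+1) := fun t => Real.sqrt_nonneg _
  have hsq : ∀ t : ℝ, (Real.sqrt (t^2+1))^2 = t^2+1 := fun t => Real.sq_sqrt (by positivity)
  have hmem : ∀ t : ℝ, min |Real.sqrt (t^2+1) - E| |Real.sqrt (t^2+1) + E| ≤ ε ↔
      abs (Real.sqrt (t^2+1) - F) ≤ ε := by
    intro t; rw [min_abs_eq E _ (hs0 t)]
  have hsε : (Real.sqrt ε)^2 = ε := Real.sq_sqrt hε0.le
  have hsε0 : 0 ≤ Real.sqrt ε := Real.sqrt_nonneg ε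
  apply unif_le _ _ (by positivity)
  by_cases h1 : F ≤ 1 + ε
  · -- A ⊆ [-3√ε, 3√ε]
    have hsub : {t : ℝ | min |Real.sqrt (t^2+1) - E| |Real.sqrt (t^2+1) + E| ≤ ε} ∩ Set.Icc (-1:ℝ) 1
        ⊆ Set.Icc (-(3*Real.sqrt ε)) (3*Real.sqrt ε) := by
      rintro t ⟨ht, -⟩
      rw [Set.mem_setOf_eq, hmem t, abs_le] at ht
      have hst : Real.sqrt (t^2+1) ≤ 1 + 2*ε := by linarith [ht.2]
      have ht2 : t^2 ≤ 9*ε := by nlinarith [hsq t, hs0 t]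
      have : |t| ≤ 3*Real.sqrt ε := by
        have h9 : Real.sqrt (t^2) ≤ Real.sqrt (9*ε) := Real.sqrt_le_sqrt ht2
        rwa [Real.sqrt_sq_eq_abs, show (9:ℝ)*ε = (3*Real.sqrt ε)^2 by nlinarith,
          Real.sqrt_sq (by positivity)] at h9
      exact abs_le.mp this
    calc volume _ ≤ volume (Set.Icc (-(3*Real.sqrt ε)) (3*Real.sqrt ε)) := measure_mono hsub
      _ = ENNReal.ofReal (2*(3*Real.sqrt ε)) := by rw [Real.volume_Icc]; ring_nf
  · push_neg at h1
    by_cases h2 : Real.sqrt 2 < F - ε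
    · -- empty
      have hsub : {t : ℝ | min |Real.sqrt (t^2+1) - E| |Real.sqrt (t^2+1) + E| ≤ ε} ∩ Set.Icc (-1:ℝ) 1
          ⊆ (∅ : Set ℝ) := by
        rintro t ⟨ht, ht1⟩
        rw [Set.mem_setOf_eq, hmem t, abs_le] at ht
        have ht2 : t^2 ≤ 1 := by
          rw [Set.mem_Icc] at ht1; nlinarith [ht1.1, ht1.2]
        have : Real.sqrt (t^2+1) ≤ Real.sqrt 2 := Real.sqrt_le_sqrt (by linarith)
        have hFs : F - ε ≤ Real.sqrt (t^2+1) := by linarith [ht.1]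
        exact absurd (le_trans hFs this) (by linarith)
      refine le_trans (measure_mono hsub) ?_
      simp
    · push_neg at h2
      set a := Real.sqrt ((F-ε)^2 - 1) with ha
      set b := Real.sqrt ((F+ε)^2 - 1) with hb
      have hFε1 : 1 ≤ F - ε := by linarith
      have ha0 : 0 ≤ a := Real.sqrt_nonneg _
      have hb0 : 0 ≤ b := Real.sqrt_nonneg _
      have ha2 : a^2 = (F-ε)^2 - 1 := Real.sq_sqrt (by nlinarith)
      have hb2 : b^2 = (F+ε)^2 - 1 := Real.sq_sqrt (by nlinarith)
      have hab : a ≤ b := by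
        have := Real.sqrt_le_sqrt (show (F-ε)^2 - 1 ≤ (F+ε)^2 - 1 by nlinarith)
        exact this
      have hsum : 2*Real.sqrt ε ≤ a + b := by
        have h4 : 4*ε ≤ (a+b)^2 := by nlinarith [mul_nonneg ha0 hb0]
        have := Real.sqrt_le_sqrt h4
        rwa [show (4:ℝ)*ε = (2*Real.sqrt ε)^2 by nlinarith, Real.sqrt_sq (by positivity),
          Real.sqrt_sq (by linarith)] at this
      have hkey : (b-a)*(a+b) = 4*F*ε := by linear_combination hb2 - ha2
      have h2s : (0:ℝ) < 2*Real.sqrt ε := by positivity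
      have hba : b - a ≤ 2*F*Real.sqrt ε := by
        have hmul : (b-a) * (2*Real.sqrt ε) ≤ (b-a)*(a+b) :=
          mul_le_mul_of_nonneg_left hsum (by linarith)
        have hmul2 : (b-a)*(a+b) = (2*F*Real.sqrt ε) * (2*Real.sqrt ε) := by
          linear_combination hkey + (-(4:ℝ)*F) * hsε
        exact le_of_mul_le_mul_right (by linarith) h2s
      have hba3 : b - a ≤ 3*Real.sqrt ε := by
        have hs2 : Real.sqrt 2 ≤ 1.42 := by
          nlinarith [Real.sq_sqrt (by norm_num : (0:ℝ) ≤ 2), Real.sqrt_nonneg 2,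
            sq_nonneg (Real.sqrt 2 - 1.42)]
        have hF3 : 2*F ≤ 3 := by linarith
        have := mul_le_mul_of_nonneg_right hF3 hsε0
        linarith
      have hsub : {t : ℝ | min |Real.sqrt (t^2+1) - E| |Real.sqrt (t^2+1) + E| ≤ ε} ∩ Set.Icc (-1:ℝ) 1
          ⊆ Set.Icc (-b) (-a) ∪ Set.Icc a b := by
        rintro t ⟨ht, -⟩
        rw [Set.mem_setOf_eq, hmem t, abs_le] at ht
        have hFs : F - ε ≤ Real.sqrt (t^2+1) := by linarith [ht.1]
        have hsu : Real.sqrt (t^2+1) ≤ F + ε := by linarith [ht.2]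
        have hl : (F-ε)^2 ≤ t^2 + 1 := by
          have := pow_le_pow_left₀ (by linarith : (0:ℝ) ≤ F - ε) hFs 2
          linarith [hsq t]
        have hu : t^2 + 1 ≤ (F+ε)^2 := by
          have := pow_le_pow_left₀ (hs0 t) hsu 2
          linarith [hsq t]
        have habs1 : a ≤ |t| := by
          have := Real.sqrt_le_sqrt (show (F-ε)^2 - 1 ≤ t^2 by linarith)
          rwa [Real.sqrt_sq_eq_abs] at this
        have habs2 : |t| ≤ b := by
          have := Real.sqrt_le_sqrt (show t^2 ≤ (F+ε)^2 - 1 by linarith)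
          rwa [Real.sqrt_sq_eq_abs] at this
        rcases le_or_gt 0 t with h | h
        · right; rw [abs_of_nonneg h] at habs1 habs2; exact ⟨habs1, habs2⟩
        · left; rw [abs_of_neg h] at habs1 habs2
          constructor <;> linarith
      refine le_trans (le_trans (measure_mono hsub) (measure_union_le _ _)) ?_
      rw [Real.volume_Icc, Real.volume_Icc]
      calc ENNReal.ofReal (-a - -b) + ENNReal.ofReal (b - a)
          ≤ ENNReal.ofReal (3*Real.sqrt ε) + ENNReal.ofReal (3*Real.sqrt ε) :=
            add_le_add (ENNReal.ofReal_le_ofReal (by linarith)) (ENNReal.ofReal_le_ofReal hba3)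
        _ = ENNReal.ofReal (2*(3*Real.sqrt ε)) := by
            rw [← ENNReal.ofReal_add (by positivity) (by positivity)]
            congr 1; ring

open Classical in
lemma measure_resEvent_le {ι : Type*} [Fintype ι] (A : Set ℝ) (hA : MeasurableSet A)
    {n : ℕ} (w : Fin n → ι) (hinj : Function.Injective w) :
    unifPi ι {u : ι → ℝ | ∀ i, u (w i) ∈ A} ≤ (unif A) ^ n := by
  set S : Finset ι := Finset.image w Finset.univ with hS
  have hset : {u : ι → ℝ | ∀ i, u (w i) ∈ A} =
      Set.pi Set.univ (fun z => if z ∈ S then A else Set.univ) := by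
    ext u
    simp only [Set.mem_setOf_eq, Set.mem_pi, Set.mem_univ, forall_true_left]
    constructor
    · intro h z
      split_ifs with hz
      · obtain ⟨i, -, rfl⟩ := Finset.mem_image.mp hz
        exact h i
      · trivial
    · intro h i
      have := h (w i)
      rwa [if_pos (Finset.mem_image_of_mem w (Finset.mem_univ i))] at this
  rw [hset, unifPi, Measure.pi_pi]
  have : ∀ z : ι, unif (if z ∈ S then A else Set.univ) = (if z ∈ S then unif A else 1) := by
    intro z; split_ifs <;> simp
  rw [Finset.prod_congr rfl (fun z _ => this z)]
  rw [Finset.prod_ite_mem Finset.univ S (fun _ => unif A), Finset.univ_inter,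
    Finset.prod_const, Finset.card_image_of_injective _ hinj, Finset.card_univ,
    Fintype.card_fin]

lemma dist1_triangle {d : ℕ} (a b c : Fin d → ℤ) : dist1 a c ≤ dist1 a b + dist1 b c := by
  rw [dist1, dist1, dist1, ← Finset.sum_add_distrib]
  apply Finset.sum_le_sum
  intro i _
  calc (a i - c i).natAbs = ((a i - b i) + (b i - c i)).natAbs := by ring_nf
    _ ≤ (a i - b i).natAbs + (b i - c i).natAbs := Int.natAbs_add_le _ _

lemma dist1_walk_le {d : ℕ} (w : ℕ → (Fin d → ℤ)) (m : ℕ)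
    (hstep : ∀ i < m, dist1 (w i) (w (i+1)) = 1) : dist1 (w 0) (w m) ≤ m := by
  induction m with
  | zero => simp [dist1]
  | succ n ih =>
    have h1 : dist1 (w 0) (w (n+1)) ≤ dist1 (w 0) (w n) + dist1 (w n) (w (n+1)) :=
      dist1_triangle _ _ _
    have h2 := hstep n (Nat.lt_succ_self n)
    have h3 := ih (fun i hi => hstep i (hi.trans (Nat.lt_succ_self n)))
    omega

/-- Loop erasure: minimal-length walks are injective. -/

lemma exists_inj_walk {α : Type*} (res : α → Prop) (dd : α → α → ℕ)
    (x y : α) (m : ℕ) (w : ℕ → α)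
    (h0 : w 0 = x) (hm : w m = y) (hres : ∀ i ≤ m, res (w i))
    (hstep : ∀ i < m, dd (w i) (w (i+1)) = 1) :
    ∃ (m' : ℕ) (w' : ℕ → α), m' ≤ m ∧ w' 0 = x ∧ w' m' = y ∧ (∀ i ≤ m', res (w' i)) ∧
      (∀ i < m', dd (w' i) (w' (i+1)) = 1) ∧ Set.InjOn w' (Set.Iic m') := by
  induction m using Nat.strong_induction_on generalizing w with
  | _ m IH =>
    by_cases hinj : Set.InjOn w (Set.Iic m)
    · exact ⟨m, w, le_rfl, h0, hm, hres, hstep, hinj⟩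
    · rw [Set.InjOn] at hinj
      push_neg at hinj
      obtain ⟨i, hi, j, hj, hij, hne⟩ := hinj
      rw [Set.mem_Iic] at hi hj
      -- wlog i < j
      rcases Nat.lt_or_ge i j with hlt | hge
      case _ =>
        clear hne
        set δ := j - i with hδ
        have hδ1 : 1 ≤ δ := by omega
        set m' := m - δ with hm'
        have him' : i ≤ m' := by omega
        have hm'δ : m' + δ = m := by omega
        set w'' : ℕ → α := fun n => if n ≤ i then w n else w (n + δ) with hw''
        have hlt' : m' < m := by omega
        have key0 : w'' 0 = x := by simp only [hw'', if_pos (Nat.zero_le i)]; exact h0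
        have keym : w'' m' = y := by
          by_cases hc : m' ≤ i
          · have hmi : m' = i := le_antisymm hc him'
            have hji : j = m := by omega
            simp only [hw'', if_pos hc]
            rw [hmi, hij, hji]; exact hm
          · simp only [hw'', if_neg hc, hm'δ, hm]
        have keyres : ∀ n ≤ m', res (w'' n) := by
          intro n hn
          by_cases hc : n ≤ i
          · simp only [hw'', if_pos hc]; exact hres n (by omega)
          · simp only [hw'', if_neg hc]; exact hres (n + δ) (by omega)
        have keystep : ∀ n < m', dd (w'' n) (w'' (n+1)) = 1 := by
          intro n hn
          by_cases hc1 : n + 1 ≤ i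
          · simp only [hw'', if_pos hc1, if_pos (by omega : n ≤ i)]
            exact hstep n (by omega)
          · by_cases hc2 : n ≤ i
            · have hni : n = i := by omega
              simp only [hw'', if_pos hc2, if_neg hc1]
              rw [hni, hij, show i + 1 + δ = j + 1 by omega]
              exact hstep j (by omega)
            · simp only [hw'', if_neg hc2, if_neg hc1]
              rw [show n + 1 + δ = n + δ + 1 by omega]
              exact hstep (n + δ) (by omega)
        obtain ⟨m2, w2, hle, rest⟩ := IH m' hlt' w'' key0 keym keyres keystep
        exact ⟨m2, w2, hle.trans hlt'.le, rest⟩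
      case _ =>
        have hlt : j < i := by omega
        clear hne
        -- symmetric: swap roles
        set δ := i - j with hδ
        have hδ1 : 1 ≤ δ := by omega
        set m' := m - δ with hm'
        have him' : j ≤ m' := by omega
        have hm'δ : m' + δ = m := by omega
        set w'' : ℕ → α := fun n => if n ≤ j then w n else w (n + δ) with hw''
        have hlt' : m' < m := by omega
        have key0 : w'' 0 = x := by simp only [hw'', if_pos (Nat.zero_le j)]; exact h0
        have keym : w'' m' = y := by
          by_cases hc : m' ≤ j
          · have hmi : m' = j := le_antisymm hc him'
            have hji : i = m := by omega
            simp only [hw'', if_pos hc]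
            rw [hmi, ← hij, hji]; exact hm
          · simp only [hw'', if_neg hc, hm'δ, hm]
        have keyres : ∀ n ≤ m', res (w'' n) := by
          intro n hn
          by_cases hc : n ≤ j
          · simp only [hw'', if_pos hc]; exact hres n (by omega)
          · simp only [hw'', if_neg hc]; exact hres (n + δ) (by omega)
        have keystep : ∀ n < m', dd (w'' n) (w'' (n+1)) = 1 := by
          intro n hn
          by_cases hc1 : n + 1 ≤ j
          · simp only [hw'', if_pos hc1, if_pos (by omega : n ≤ j)]
            exact hstep n (by omega)
          · by_cases hc2 : n ≤ j
            · have hni : n = j := by omega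
              simp only [hw'', if_pos hc2, if_neg hc1]
              rw [hni, ← hij, show j + 1 + δ = i + 1 by omega]
              exact hstep i (by omega)
            · simp only [hw'', if_neg hc2, if_neg hc1]
              rw [show n + 1 + δ = n + δ + 1 by omega]
              exact hstep (n + δ) (by omega)
        obtain ⟨m2, w2, hle, rest⟩ := IH m' hlt' w'' key0 keym keyres keystep
        exact ⟨m2, w2, hle.trans hlt'.le, rest⟩

lemma unit_mem {d : ℕ} (v : Fin d → ℤ) (hv : (∑ i, (v i).natAbs) = 1) :
    ∃ p : Fin d × Bool, v = (fun j => if j = p.1 then (if p.2 then (1:ℤ) else -1) else 0) := by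
  have hex : ∃ i, (v i).natAbs ≠ 0 := by
    by_contra h
    push_neg at h
    rw [Finset.sum_eq_zero (fun i _ => h i)] at hv
    exact absurd hv (by norm_num)
  obtain ⟨i, hi⟩ := hex
  have hsplit : (v i).natAbs + ∑ j ∈ Finset.univ.erase i, (v j).natAbs = 1 := by
    rw [← hv]
    exact Finset.add_sum_erase Finset.univ (fun j => (v j).natAbs) (Finset.mem_univ i)
  have h1 : (v i).natAbs = 1 := by omega
  have h2 : ∑ j ∈ Finset.univ.erase i, (v j).natAbs = 0 := by omega
  have hz : ∀ j, j ≠ i → v j = 0 := by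
    intro j hj
    exact Int.natAbs_eq_zero.mp
      (Finset.sum_eq_zero_iff.mp h2 j (Finset.mem_erase.mpr ⟨hj, Finset.mem_univ j⟩))
  rcases Int.natAbs_eq_iff.mp h1 with h | h
  · refine ⟨⟨i, true⟩, funext fun j => ?_⟩
    by_cases hji : j = i
    · subst hji; simpa using h
    · simp [hji, hz j hji]
  · refine ⟨⟨i, false⟩, funext fun j => ?_⟩
    by_cases hji : j = i
    · subst hji; simpa using h
    · simp [hji, hz j hji]

open Classical in
lemma card_walk_le (d m : ℕ) {Λ : Finset (Fin d → ℤ)} (x : {z // z ∈ Λ}) :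
    (Finset.univ.filter (fun w : Fin (m+1) → {z // z ∈ Λ} =>
       w 0 = x ∧ ∀ i : Fin m, dist1 (w i.castSucc : Fin d → ℤ) (w i.succ : Fin d → ℤ) = 1)).card
      ≤ (2*d)^m := by
  set U : Finset (Fin d → ℤ) :=
    Finset.image (fun p : Fin d × Bool => fun j => if j = p.1 then (if p.2 then (1:ℤ) else -1) else 0)
      Finset.univ with hU
  have hcard : (Fintype.piFinset (fun _ : Fin m => U)).card ≤ (2*d)^m := by
    rw [Fintype.card_piFinset]
    calc ∏ _i : Fin m, U.card ≤ ∏ _i : Fin m, 2*d := by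
          apply Finset.prod_le_prod' -- maybe wrong name
          intro i _
          calc U.card ≤ Fintype.card (Fin d × Bool) := by
                exact le_trans Finset.card_image_le (le_of_eq (Finset.card_univ))
            _ = 2*d := by simp [Fintype.card_prod]; ring
      _ = (2*d)^m := by rw [Finset.prod_const, Finset.card_univ, Fintype.card_fin]
  refine le_trans (Finset.card_le_card_of_injOn
    (fun w => fun i : Fin m => (w i.succ : Fin d → ℤ) - (w i.castSucc : Fin d → ℤ))
    ?_ ?_) hcard
  · intro w hw
    rw [Finset.mem_coe, Finset.mem_filter] at hw
    obtain ⟨-, -, hstep⟩ := hw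
    rw [Finset.mem_coe, Fintype.mem_piFinset]
    intro i
    have h1 : ∑ j, ((w i.succ : Fin d → ℤ) j - (w i.castSucc : Fin d → ℤ) j).natAbs = 1 := by
      have := hstep i
      rw [dist1] at this
      calc ∑ j, ((w i.succ : Fin d → ℤ) j - (w i.castSucc : Fin d → ℤ) j).natAbs
          = ∑ j, ((w i.castSucc : Fin d → ℤ) j - (w i.succ : Fin d → ℤ) j).natAbs := by
            apply Finset.sum_congr rfl
            intro j _
            rw [← Int.natAbs_neg]; congr 1; ring
        _ = 1 := this
    obtain ⟨p, hp⟩ := unit_mem _ h1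
    rw [hU]
    exact Finset.mem_image.mpr ⟨p, Finset.mem_univ p, hp.symm⟩
  · intro w1 hw1 w2 hw2 hf
    rw [Finset.mem_coe, Finset.mem_filter] at hw1 hw2
    obtain ⟨-, h10, -⟩ := hw1
    obtain ⟨-, h20, -⟩ := hw2
    funext i
    induction i using Fin.induction with
    | zero => rw [h10, h20]
    | succ i ih =>
      have := congr_fun hf i
      simp only at this
      apply Subtype.ext
      have hcoord : (w1 i.succ : Fin d → ℤ) - (w1 i.castSucc : Fin d → ℤ)
          = (w2 i.succ : Fin d → ℤ) - (w2 i.castSucc : Fin d → ℤ) := this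
      have : (w1 i.castSucc : Fin d → ℤ) = (w2 i.castSucc : Fin d → ℤ) := by rw [ih]
      calc (w1 i.succ : Fin d → ℤ)
          = (w1 i.succ : Fin d → ℤ) - (w1 i.castSucc : Fin d → ℤ) + (w1 i.castSucc : Fin d → ℤ) := by ring
        _ = (w2 i.succ : Fin d → ℤ) - (w2 i.castSucc : Fin d → ℤ) + (w2 i.castSucc : Fin d → ℤ) := by
            rw [hcoord, ‹(w1 i.castSucc : Fin d → ℤ) = (w2 i.castSucc : Fin d → ℤ)›]
        _ = (w2 i.succ : Fin d → ℤ) := by ring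


theorem resonant_component_probability (d : ℕ) (hd : 1 ≤ d)
    (Λ : Finset (Fin d → ℤ)) (hrect : ∃ a b, Λ = Finset.Icc a b)
    (E ε : ℝ) (hε0 : 0 < ε) (hε1 : 144 * (d : ℝ) ^ 2 * ε ≤ 1)
    (x y : Fin d → ℤ) (hx : x ∈ Λ) (hy : y ∈ Λ) :
    unifPi {z // z ∈ Λ}
        {u : {z // z ∈ Λ} → ℝ |
          ∃ (m : ℕ) (w : ℕ → {z // z ∈ Λ}),
            w 0 = ⟨x, hx⟩ ∧ w m = ⟨y, hy⟩ ∧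
            (∀ i ≤ m, min |Real.sqrt (u (w i) ^ 2 + 1) - E|
                |Real.sqrt (u (w i) ^ 2 + 1) + E| ≤ ε) ∧
            (∀ i < m, dist1 (w i : Fin d → ℤ) (w (i + 1) : Fin d → ℤ) = 1)} ≤
      ENNReal.ofReal ((12 * d * Real.sqrt ε) ^ (dist1 x y + 1)) := by
  classical
  have hd1 : (1:ℝ) ≤ (d:ℝ) := by exact_mod_cast hd
  have hsε0 : 0 ≤ Real.sqrt ε := Real.sqrt_nonneg ε
  have hsε : (Real.sqrt ε)^2 = ε := Real.sq_sqrt hε0.le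
  have hε144 : ε ≤ 1/144 := by
    have hd2 : (1:ℝ) ≤ (d:ℝ)^2 := by nlinarith
    nlinarith [mul_le_mul_of_nonneg_right hd2 hε0.le]
  have h12 : 12 * (d:ℝ) * Real.sqrt ε ≤ 1 := by
    nlinarith [sq_nonneg (12 * (d:ℝ) * Real.sqrt ε - 1)]
  set A : Set ℝ := {t : ℝ | min |Real.sqrt (t^2+1) - E| |Real.sqrt (t^2+1) + E| ≤ ε} with hA
  set k := dist1 x y with hk
  set Q : ENNReal := ENNReal.ofReal (3 * Real.sqrt ε) with hQ
  have hunifA : unif A ≤ Q := unif_resonant_le E ε hε0 hε144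
  -- the walk finsets
  set P : ∀ m : ℕ, (Fin (m+1) → {z // z ∈ Λ}) → Prop := fun m w =>
    w 0 = ⟨x, hx⟩ ∧
      (∀ i : Fin m, dist1 (w i.castSucc : Fin d → ℤ) (w i.succ : Fin d → ℤ) = 1) ∧
      Function.Injective w with hP
  set W : ∀ m : ℕ, Finset (Fin (m+1) → {z // z ∈ Λ}) := fun m =>
    Finset.univ.filter (P m) with hW
  have hWcard : ∀ m, (W m).card ≤ (2*d)^m := by
    intro m
    refine le_trans (Finset.card_le_card ?_) (card_walk_le d m ⟨x, hx⟩)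
    intro w hw
    rw [hW, Finset.mem_filter] at hw
    exact Finset.mem_filter.mpr ⟨hw.1, hw.2.1, hw.2.2.1⟩
  -- containment in the union over injective walks
  have hsub : {u : {z // z ∈ Λ} → ℝ |
          ∃ (m : ℕ) (w : ℕ → {z // z ∈ Λ}),
            w 0 = ⟨x, hx⟩ ∧ w m = ⟨y, hy⟩ ∧
            (∀ i ≤ m, min |Real.sqrt (u (w i) ^ 2 + 1) - E|
                |Real.sqrt (u (w i) ^ 2 + 1) + E| ≤ ε) ∧
            (∀ i < m, dist1 (w i : Fin d → ℤ) (w (i + 1) : Fin d → ℤ) = 1)}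
      ⊆ ⋃ (n : ℕ), ⋃ (w ∈ W (n + k)),
          {u : {z // z ∈ Λ} → ℝ | ∀ i : Fin (n + k + 1), u (w i) ∈ A} := by
    intro u hu
    obtain ⟨m, w, h0, hm, hres, hstep⟩ := hu
    obtain ⟨m', w', hle, h0', hm', hres', hstep', hinj⟩ :=
      exists_inj_walk (fun z : {z // z ∈ Λ} => u z ∈ A)
        (fun a b => dist1 (a : Fin d → ℤ) (b : Fin d → ℤ)) ⟨x, hx⟩ ⟨y, hy⟩ m w
        h0 hm (fun i hi => hres i hi) hstep
    have hkm : k ≤ m' := by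
      have hwalk := dist1_walk_le (fun n => (w' n : Fin d → ℤ)) m' hstep'
      rw [hk, show x = ((⟨x, hx⟩ : {z // z ∈ Λ}) : Fin d → ℤ) from rfl,
        show y = ((⟨y, hy⟩ : {z // z ∈ Λ}) : Fin d → ℤ) from rfl, ← h0', ← hm']
      exact hwalk
    obtain ⟨n, rfl⟩ : ∃ n, m' = n + k := ⟨m' - k, by omega⟩
    refine Set.mem_iUnion.mpr ⟨n, Set.mem_iUnion₂.mpr
      ⟨fun i : Fin (n + k + 1) => w' i.val, ?_, ?_⟩⟩
    · rw [hW, Finset.mem_filter]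
      refine ⟨Finset.mem_univ _, ?_, ?_, ?_⟩
      · exact h0'
      · intro i
        exact hstep' i.val i.isLt
      · intro i j hij
        exact Fin.ext (hinj (Set.mem_Iic.mpr (by omega : i.val ≤ n + k))
          (Set.mem_Iic.mpr (by omega : j.val ≤ n + k)) hij)
    · intro i
      exact hres' i.val (by omega : i.val ≤ n + k)
  -- the union bound
  calc unifPi {z // z ∈ Λ} _
      ≤ unifPi {z // z ∈ Λ} (⋃ (n : ℕ), ⋃ (w ∈ W (n + k)),
          {u : {z // z ∈ Λ} → ℝ | ∀ i : Fin (n + k + 1), u (w i) ∈ A}) :=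
        measure_mono hsub
    _ ≤ ∑' (n : ℕ), unifPi {z // z ∈ Λ} (⋃ (w ∈ W (n + k)),
          {u : {z // z ∈ Λ} → ℝ | ∀ i : Fin (n + k + 1), u (w i) ∈ A}) :=
        measure_iUnion_le _
    _ ≤ ∑' (n : ℕ), ((2*d : ℕ) : ENNReal)^(n+k) * Q^(n+k+1) := by
        apply ENNReal.tsum_le_tsum
        intro n
        calc unifPi {z // z ∈ Λ} (⋃ (w ∈ W (n + k)),
              {u : {z // z ∈ Λ} → ℝ | ∀ i : Fin (n + k + 1), u (w i) ∈ A})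
            ≤ ∑ w ∈ W (n + k), unifPi {z // z ∈ Λ}
              {u : {z // z ∈ Λ} → ℝ | ∀ i : Fin (n + k + 1), u (w i) ∈ A} :=
            measure_biUnion_finset_le _ _
          _ ≤ ∑ _w ∈ W (n + k), Q^(n+k+1) := by
              apply Finset.sum_le_sum
              intro w hw
              rw [hW, Finset.mem_filter] at hw
              refine le_trans (measure_resEvent_le A ?_ w hw.2.2.2) ?_
              · have hcont : Continuous (fun t : ℝ =>
                    min |Real.sqrt (t^2+1) - E| |Real.sqrt (t^2+1) + E|) := by
                  fun_prop
                exact measurableSet_le hcont.measurable measurable_const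
              · exact pow_le_pow_left' hunifA _
          _ = (W (n+k)).card • Q^(n+k+1) := by rw [Finset.sum_const]
          _ = ((W (n+k)).card : ENNReal) * Q^(n+k+1) := by rw [nsmul_eq_mul]
          _ ≤ ((2*d : ℕ) : ENNReal)^(n+k) * Q^(n+k+1) := by
              apply mul_le_mul_left
              rw [← Nat.cast_pow]
              exact_mod_cast hWcard (n+k)
    _ ≤ ENNReal.ofReal ((12 * d * Real.sqrt ε) ^ (k + 1)) := by
        set r : ENNReal := ((2*d : ℕ) : ENNReal) * Q with hr
        have hterm : ∀ n : ℕ, ((2*d : ℕ) : ENNReal)^(n+k) * Q^(n+k+1)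
            = Q * ((r^k) * r^n) := by
          intro n
          rw [hr, mul_pow, mul_pow, pow_succ, pow_add, pow_add]
          ring
        rw [tsum_congr hterm, ENNReal.tsum_mul_left, ENNReal.tsum_mul_left,
          ENNReal.tsum_geometric]
        have hrval : r = ENNReal.ofReal (6 * d * Real.sqrt ε) := by
          rw [hr, hQ, show (((2*d : ℕ)) : ENNReal) = ENNReal.ofReal ((2*d : ℕ) : ℝ) from
            (ENNReal.ofReal_natCast _).symm, ← ENNReal.ofReal_mul (by positivity)]
          congr 1
          push_cast
          ring
        have hhalf : r ≤ 2⁻¹ := by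
          rw [hrval, show (2⁻¹ : ENNReal) = ENNReal.ofReal (1/2) by
            rw [ENNReal.ofReal_div_of_pos (by norm_num)]; norm_num]
          exact ENNReal.ofReal_le_ofReal (by linarith)
        have hinv : (1 - r)⁻¹ ≤ 2 := by
          have h1 : (2:ENNReal)⁻¹ ≤ 1 - r := by
            have heq : (1:ENNReal) - 2⁻¹ = 2⁻¹ := by
              rw [← ENNReal.inv_two_add_inv_two]
              exact ENNReal.add_sub_cancel_left (by norm_num)
            calc (2:ENNReal)⁻¹ = 1 - 2⁻¹ := heq.symm
              _ ≤ 1 - r := tsub_le_tsub_left hhalf 1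
          calc (1 - r)⁻¹ ≤ (2⁻¹ : ENNReal)⁻¹ := ENNReal.inv_le_inv.mpr h1
            _ = 2 := by rw [inv_inv]
        calc Q * (r^k * (1 - r)⁻¹)
            ≤ Q * (r^k * 2) := by
              apply mul_le_mul_right
              exact mul_le_mul_right hinv _
          _ = (2 * Q) * r^k := by ring
          _ ≤ ENNReal.ofReal ((12 * d * Real.sqrt ε) ^ (k + 1)) := by
              rw [hrval, hQ, show (2:ENNReal) = ENNReal.ofReal 2 by norm_num,
                ← ENNReal.ofReal_mul (by norm_num), ← ENNReal.ofReal_pow (by positivity),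
                ← ENNReal.ofReal_mul (by positivity)]
              apply ENNReal.ofReal_le_ofReal
              rw [pow_succ]
              have h6 : 2 * (3 * Real.sqrt ε) ≤ 12 * d * Real.sqrt ε := by nlinarith
              have h6d : (6 * d * Real.sqrt ε)^k ≤ (12 * d * Real.sqrt ε)^k := by
                apply pow_le_pow_left₀ (by positivity)
                nlinarith
              calc 2 * (3 * Real.sqrt ε) * (6 * d * Real.sqrt ε)^k
                  ≤ (12 * d * Real.sqrt ε) * (12 * d * Real.sqrt ε)^k := by
                    apply mul_le_mul h6 h6d (by positivity) (by positivity)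
                _ = (12 * d * Real.sqrt ε)^k * (12 * d * Real.sqrt ε) := by ring
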